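/- For all real z with 0 ≤ z ≤ 1 and every real κ ≥ 1, one has (1 - z)^(2κ) ≤ 1 - 2κ·z^(2κ-1) + (2κ-1)·z^(2κ). -/

import Mathlib

open Real

private lemma key_aux (x : ℝ) (hx0 : 0 ≤ x) (hx1 : x < 1) {s : ℝ} (hs : 0 ≤ s) :
    (1 - x) ^ s * (1 + (s + 1) * x) ≤ 1 + x := by
  have hz : (0:ℝ) < 1 - x := by linarith
  set L := Real.log (1 - x) with hL
  have hLle : L ≤ -x := by
    have := Real.log_le_sub_one_of_pos hz
    simpa [hL] using by linarith [this]
  set g : ℝ → ℝ := fun s => Real.exp (s * L) * (1 + (s + 1) * x) with hg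
  have hderiv : ∀ t : ℝ, HasDerivAt g (Real.exp (t * L) * L * (1 + (t + 1) * x)
      + Real.exp (t * L) * x) t := by
    intro t
    have h1 : HasDerivAt (fun s : ℝ => s * L) L t := hasDerivAt_mul_const L
    have h2 : HasDerivAt (fun s : ℝ => Real.exp (s * L)) (Real.exp (t * L) * L) t := h1.exp
    have h3 : HasDerivAt (fun s : ℝ => 1 + (s + 1) * x) x t := by
      have : HasDerivAt (fun s : ℝ => (s + 1) * x) x t :=
        ((hasDerivAt_id t).add_const 1).mul_const x |>.congr_deriv (by ring)
      simpa using this.const_add 1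
    exact h2.mul h3
  have hanti : AntitoneOn g (Set.Ici (0:ℝ)) := by
    apply antitoneOn_of_deriv_nonpos (convex_Ici 0)
    · exact Continuous.continuousOn (by
        apply Continuous.mul
        · exact Real.continuous_exp.comp (continuous_id.mul continuous_const)
        · continuity)
    · intro t ht
      exact ((hderiv t).differentiableAt).differentiableWithinAt
    · intro t ht
      simp only [interior_Ici, Set.mem_Ioi] at ht
      rw [(hderiv t).deriv]
      have hx' : (0:ℝ) ≤ 1 + (t + 1) * x := by nlinarith
      have h1 : L * (1 + (t + 1) * x) ≤ -x * (1 + (t + 1) * x) :=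
        mul_le_mul_of_nonneg_right hLle hx'
      have hexp : (0:ℝ) < Real.exp (t * L) := Real.exp_pos _
      have : L * (1 + (t + 1) * x) + x ≤ -(t + 1) * x ^ 2 := by nlinarith
      have hle : L * (1 + (t + 1) * x) + x ≤ 0 := by nlinarith
      nlinarith [mul_le_mul_of_nonneg_left hle hexp.le]
  have hgs : g s ≤ g 0 := hanti (Set.mem_Ici.mpr le_rfl) (Set.mem_Ici.mpr hs) hs
  have hrw : (1 - x) ^ s = Real.exp (s * L) := by
    rw [hL, Real.rpow_def_of_pos hz, mul_comm]
  rw [hrw]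
  simpa [hg] using hgs

theorem stmt_0 (z κ : ℝ) (hz0 : 0 ≤ z) (hz1 : z ≤ 1) (hκ : 1 ≤ κ) :
    (1 - z) ^ (2 * κ) ≤ 1 - 2 * κ * z ^ (2 * κ - 1) + (2 * κ - 1) * z ^ (2 * κ) := by
  rcases eq_or_lt_of_le hz0 with h0 | hzpos
  · -- z = 0
    have hz : z = 0 := h0.symm
    subst hz
    rw [Real.zero_rpow (by linarith : 2 * κ - 1 ≠ 0), Real.zero_rpow (by positivity : 2 * κ ≠ 0)]
    simp
  rcases eq_or_lt_of_le hz1 with h1 | hzlt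
  · -- z = 1
    subst h1
    rw [sub_self, Real.zero_rpow (by positivity : 2 * κ ≠ 0)]
    norm_num
  -- 0 < z < 1
  have hA : (1 - z) ^ (2 * κ) ≤ (1 - z) ^ (2:ℝ) :=
    Real.rpow_le_rpow_of_exponent_ge (by linarith) (by linarith) (by linarith)
  have hB := key_aux (1 - z) (by linarith) (by linarith) (s := 2 * κ - 2) (by linarith)
  set a := z ^ (2 * κ - 2) with ha
  have ha0 : 0 ≤ a := Real.rpow_nonneg hz0 _
  have hrw1 : z ^ (2 * κ - 1) = a * z := by
    rw [ha, show 2 * κ - 1 = (2 * κ - 2) + 1 by ring, Real.rpow_add hzpos, Real.rpow_one]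
  have hrw2 : z ^ (2 * κ) = a * z ^ 2 := by
    have h2 : z ^ ((2 * κ - 2) + (2:ℝ)) = z ^ (2 * κ - 2) * z ^ (2:ℝ) :=
      Real.rpow_add hzpos _ _
    rw [show 2 * κ = (2 * κ - 2) + (2:ℝ) by ring, h2, ← ha]
    congr 1
    rw [← Real.rpow_natCast z 2]; norm_num
  have hB' : a * (1 + (2 * κ - 1) * (1 - z)) ≤ 2 - z := by
    rw [show (1 : ℝ) - (1 - z) = z from by ring] at hB
    rw [← ha] at hB
    nlinarith [hB]
  have hmul : a * (1 + (2 * κ - 1) * (1 - z)) * z ≤ (2 - z) * z :=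
    mul_le_mul_of_nonneg_right hB' hzpos.le
  have hsq : (1 - z) ^ (2:ℝ) = (1 - z) ^ (2:ℕ) := by
    rw [← Real.rpow_natCast]; norm_num
  rw [hrw1, hrw2]
  calc (1 - z) ^ (2 * κ) ≤ (1 - z) ^ (2:ℝ) := hA
    _ = (1 - z) ^ (2:ℕ) := hsq
    _ ≤ 1 - 2 * κ * (a * z) + (2 * κ - 1) * (a * z ^ 2) := by nlinarith [hmul]
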